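/- Let l ≥ 1, let n : Fin l → ℕ with n k ≥ 1 for every k, and for each k let α k be a fixed-point-free involution of ZMod (2 · n k) that is non-crossing. Then the permutation of the disjoint union Σ k : Fin l, ZMod (2 · n k) acting on the k-th summand by j ↦ α k (j + 1) has exactly l + Σ k, n k orbits. (Equivalently: a planar chord diagram on l circles with a total of δ chords has exactly l + δ planar loops, as asserted and used throughout the paper.) -/

import Mathlib

/-- `j` lies strictly between `a` and `b` in the positive cyclic order on `ZMod m`:
the open cyclic interval from `a` to `b` consists of the points met strictly between
`a` and `b` when traveling from `a` in the positive direction. -/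
def CyclicBetween {m : ℕ} (a b j : ZMod m) : Prop :=
  0 < (j - a).val ∧ (j - a).val < (b - a).val

/-- The chords `{i, α i}` and `{j, α j}` cross: exactly one of `j`, `α j` lies in the
open cyclic interval from `i` to `α i`. -/
def ChordsCross {m : ℕ} (α : Equiv.Perm (ZMod m)) (i j : ZMod m) : Prop :=
  Xor' (CyclicBetween i (α i) j) (CyclicBetween i (α i) (α j))

/-- The chord diagram encoded by the involution `α` is non-crossing (planar):
no two distinct chords cross. -/
def NonCrossing {m : ℕ} (α : Equiv.Perm (ZMod m)) : Prop :=
  ∀ i j : ZMod m, j ≠ i → j ≠ α i → ¬ ChordsCross α i j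

/-- The "planar loop" permutation `p j = α (j + 1)` on arc labels. -/
def loopPerm {m : ℕ} (α : Equiv.Perm (ZMod m)) : Equiv.Perm (ZMod m) :=
  (Equiv.addRight (1 : ZMod m)).trans α

/-- The setoid whose equivalence classes are the orbits of a permutation. -/
def orbitSetoid {β : Type*} (p : Equiv.Perm β) : Setoid β :=
  ⟨p.SameCycle,
    ⟨fun x => Equiv.Perm.SameCycle.refl p x, fun h => h.symm, fun h h' => h.trans h'⟩⟩

open Equiv Equiv.Perm


section Generic
variable {β : Type*} [Finite β]

/-- If `R` is reflexive-transitive and closed under one application of `u`,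
then it contains `SameCycle u`. -/
theorem sameCycle_subrel (u : Equiv.Perm β) (R : β → β → Prop)
    (hrefl : ∀ x, R x x) (htrans : ∀ {x y z}, R x y → R y z → R x z)
    (hstep : ∀ x, R x (u x)) : ∀ x y, u.SameCycle x y → R x y := by
  have key : ∀ (n : ℕ) (x : β), R x ((u ^ n) x) := by
    intro n
    induction n with
    | zero => simpa using hrefl
    | succ n ih =>
      intro x
      have : (u ^ (n+1)) x = (u ^ n) (u x) := by
        rw [pow_succ]; rfl
      rw [this]
      exact htrans (hstep x) (ih (u x))
  intro x y h
  obtain ⟨n, -, rfl⟩ := h.exists_pow_eq'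
  exact key n x
end Generic

section Merge
variable {β : Type*} [Finite β] [DecidableEq β]

theorem sameCycle_mul_swap_self (p : Equiv.Perm β) (a b : β) (hab : ¬ p.SameCycle a b) :
    (p * Equiv.swap a b).SameCycle a b := by
  classical
  set q := p * Equiv.swap a b with hq
  have hex : ∃ s, 0 < s ∧ (p ^ s) b = b :=
    ⟨orderOf p, orderOf_pos p, by rw [pow_orderOf_eq_one]; rfl⟩
  set s := Nat.find hex with hsdef
  obtain ⟨hs0, hsb⟩ : 0 < s ∧ (p ^ s) b = b := Nat.find_spec hex
  have hmin : ∀ k, 0 < k → k < s → (p ^ k) b ≠ b := fun k hk0 hks hkb =>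
    Nat.find_min hex hks ⟨hk0, hkb⟩
  have hne_a : ∀ k : ℕ, (p ^ k) b ≠ a := fun k hk =>
    hab (Equiv.Perm.SameCycle.symm ⟨(k : ℤ), by simpa [zpow_natCast] using hk⟩)
  have key : ∀ k, 1 ≤ k → k ≤ s → (q ^ k) a = (p ^ k) b := by
    intro k hk1 hks
    induction k with
    | zero => omega
    | succ k ih =>
      rcases Nat.eq_or_lt_of_le hk1 with h1 | h1
      · have : (1:ℕ) = 1 := rfl
        have : k = 0 := by omega
        subst this
        simp [q, pow_succ, Equiv.swap_apply_left, Equiv.Perm.mul_apply]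
      · have hk : 1 ≤ k := by omega
        have hks' : k ≤ s := by omega
        have ihk := ih hk hks'
        have h1' : (q ^ (k+1)) a = q ((q ^ k) a) := by rw [pow_succ']; rfl
        have h2' : (p ^ (k+1)) b = p ((p ^ k) b) := by rw [pow_succ']; rfl
        rw [h1', h2', ihk]
        have hnb : (p ^ k) b ≠ b := hmin k (by omega) (by omega)
        simp [q, Equiv.Perm.mul_apply, Equiv.swap_apply_of_ne_of_ne (hne_a k) hnb]
  exact ⟨(s : ℤ), by simpa [zpow_natCast] using (key s hs0 le_rfl).trans hsb⟩

theorem sameCycle_mul_swap_iff (p : Equiv.Perm β) (a b : β) (hab : ¬ p.SameCycle a b)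
    (x y : β) :
    (p * Equiv.swap a b).SameCycle x y ↔
      p.SameCycle x y ∨ (p.SameCycle x a ∧ p.SameCycle b y) ∨
        (p.SameCycle x b ∧ p.SameCycle a y) := by
  classical
  set q := p * Equiv.swap a b with hq
  have hqab : q.SameCycle a b := sameCycle_mul_swap_self p a b hab
  -- p-step implies q-SameCycle
  have hstep_pq : ∀ z : β, q.SameCycle z (p z) := by
    intro z
    rcases eq_or_ne z a with rfl | hza
    · have : q b = p z := by simp [q, Equiv.Perm.mul_apply]
      exact hqab.trans (this ▸ ⟨1, by simp⟩)
    · rcases eq_or_ne z b with rfl | hzb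
      · have : q a = p z := by simp [q, Equiv.Perm.mul_apply]
        exact hqab.symm.trans (this ▸ ⟨1, by simp⟩)
      · have : q z = p z := by simp [q, Equiv.Perm.mul_apply, Equiv.swap_apply_of_ne_of_ne hza hzb]
        exact this ▸ ⟨1, by simp⟩
  have hpq : ∀ x y : β, p.SameCycle x y → q.SameCycle x y :=
    sameCycle_subrel p _ (fun z => Equiv.Perm.SameCycle.refl q z)
      (fun h h' => h.trans h') hstep_pq
  constructor
  · -- q-SameCycle implies merged relation
    set R : β → β → Prop := fun u v =>
      p.SameCycle u v ∨ (p.SameCycle u a ∧ p.SameCycle b v) ∨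
        (p.SameCycle u b ∧ p.SameCycle a v) with hR
    have hrefl : ∀ z, R z z := fun z => Or.inl (Equiv.Perm.SameCycle.refl p z)
    have htrans : ∀ {u v w}, R u v → R v w → R u w := by
      rintro u v w (h1 | ⟨h1, h2⟩ | ⟨h1, h2⟩) (h3 | ⟨h3, h4⟩ | ⟨h3, h4⟩)
      · exact Or.inl (h1.trans h3)
      · exact Or.inr (Or.inl ⟨h1.trans h3, h4⟩)
      · exact Or.inr (Or.inr ⟨h1.trans h3, h4⟩)
      · exact Or.inr (Or.inl ⟨h1, h2.trans h3⟩)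
      · exact absurd ((h2.trans h3).symm) hab
      · exact Or.inl (h1.trans h4)
      · exact Or.inr (Or.inr ⟨h1, h2.trans h3⟩)
      · exact Or.inl (h1.trans h4)
      · exact absurd (h2.trans h3) hab
    have hstep : ∀ z, R z (q z) := by
      intro z
      rcases eq_or_ne z a with rfl | hza
      · have : q z = p b := by simp [q, Equiv.Perm.mul_apply]
        rw [this]
        exact Or.inr (Or.inl ⟨Equiv.Perm.SameCycle.refl p z, ⟨1, by simp⟩⟩)
      · rcases eq_or_ne z b with rfl | hzb
        · have : q z = p a := by simp [q, Equiv.Perm.mul_apply]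
          rw [this]
          exact Or.inr (Or.inr ⟨Equiv.Perm.SameCycle.refl p z, ⟨1, by simp⟩⟩)
        · have : q z = p z := by
            simp [q, Equiv.Perm.mul_apply, Equiv.swap_apply_of_ne_of_ne hza hzb]
          rw [this]
          exact Or.inl ⟨1, by simp⟩
    exact fun h => sameCycle_subrel q R hrefl htrans hstep x y h
  · rintro (h | ⟨h1, h2⟩ | ⟨h1, h2⟩)
    · exact hpq _ _ h
    · exact ((hpq _ _ h1).trans hqab).trans (hpq _ _ h2)
    · exact ((hpq _ _ h1).trans hqab.symm).trans (hpq _ _ h2)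
end Merge

section Card
variable {β : Type*} [Finite β] [DecidableEq β]

theorem card_orbits_mul_swap (p : Equiv.Perm β) (a b : β) (hab : ¬ p.SameCycle a b) :
    Nat.card (Quotient (orbitSetoid p)) =
      Nat.card (Quotient (orbitSetoid (p * Equiv.swap a b))) + 1 := by
  classical
  set q := p * Equiv.swap a b with hq
  have hchar := sameCycle_mul_swap_iff p a b hab
  have hqab : q.SameCycle a b := sameCycle_mul_swap_self p a b hab
  have hpq : ∀ x y, p.SameCycle x y → q.SameCycle x y := fun x y h => (hchar x y).2 (Or.inl h)
  have hmkp : ∀ x y : β, Quotient.mk (orbitSetoid p) x = Quotient.mk (orbitSetoid p) y ↔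
      p.SameCycle x y := fun x y => ⟨fun h => Quotient.exact h, fun h => Quotient.sound h⟩
  set T := {c : Quotient (orbitSetoid p) // c ≠ Quotient.mk (orbitSetoid p) b} with hT
  let f : β → T := fun x =>
    if hx : p.SameCycle x b then
      ⟨Quotient.mk (orbitSetoid p) a, fun h => hab ((hmkp a b).1 h)⟩
    else ⟨Quotient.mk (orbitSetoid p) x, fun h => hx ((hmkp x b).1 h)⟩
  have hwd : ∀ x y : β, q.SameCycle x y → f x = f y := by
    intro x y hxy
    rcases (hchar x y).1 hxy with h | ⟨h1, h2⟩ | ⟨h1, h2⟩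
    · by_cases hx : p.SameCycle x b
      · have hy : p.SameCycle y b := h.symm.trans hx
        simp only [f, dif_pos hx, dif_pos hy]
      · have hy : ¬ p.SameCycle y b := fun hy => hx (h.trans hy)
        simp only [f, dif_neg hx, dif_neg hy]
        exact Subtype.ext (Quotient.sound h)
    · -- x ~ a, b ~ y
      have hx : ¬ p.SameCycle x b := fun hx => hab (hx.symm.trans h1).symm
      have hy : p.SameCycle y b := h2.symm
      simp only [f, dif_neg hx, dif_pos hy]
      exact Subtype.ext (Quotient.sound h1)
    · -- x ~ b, a ~ y
      have hy : ¬ p.SameCycle y b := fun hy => hab (h2.trans hy)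
      simp only [f, dif_pos h1, dif_neg hy]
      exact Subtype.ext (Quotient.sound h2)
  let F : Quotient (orbitSetoid q) → T := Quotient.lift f hwd
  let G : T → Quotient (orbitSetoid q) := fun c =>
    Quotient.lift (fun x => Quotient.mk (orbitSetoid q) x)
      (fun x y h => Quotient.sound (hpq x y h)) c.1
  have hFG : Function.LeftInverse G F := by
    intro c
    induction c using Quotient.ind with
    | _ x =>
      show G (f x) = Quotient.mk (orbitSetoid q) x
      by_cases hx : p.SameCycle x b
      · simp only [f, dif_pos hx]
        exact Quotient.sound (hqab.trans (hpq x b hx).symm)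
      · simp only [f, dif_neg hx]
        rfl
  have hGF : Function.RightInverse G F := by
    rintro ⟨c, hc⟩
    induction c using Quotient.ind with
    | _ x =>
      have hx : ¬ p.SameCycle x b := fun h => hc (Quotient.sound h)
      show f x = _
      simp only [f, dif_neg hx]
  have e : Quotient (orbitSetoid q) ≃ T := ⟨F, G, hFG, hGF⟩
  have e2 : Option T ≃ Quotient (orbitSetoid p) :=
    Equiv.optionSubtypeNe (Quotient.mk (orbitSetoid p) b)
  calc Nat.card (Quotient (orbitSetoid p)) = Nat.card (Option T) := (Nat.card_congr e2).symm
    _ = Nat.card T + 1 := Finite.card_option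
    _ = Nat.card (Quotient (orbitSetoid q)) + 1 := by rw [Nat.card_congr e]
end Card

theorem loopPerm_apply {m : ℕ} (α : Equiv.Perm (ZMod m)) (x : ZMod m) :
    loopPerm α x = α (x + 1) := rfl

theorem card_orbits_loopPerm_id {m : ℕ} [NeZero m] (α : Equiv.Perm (ZMod m))
    (hid : ∀ i, α i = i) :
    Nat.card (Quotient (orbitSetoid (loopPerm α))) = 1 := by
  have hpow : ∀ (k : ℕ) (x : ZMod m), ((loopPerm α) ^ k) x = x + (k : ZMod m) := by
    intro k
    induction k with
    | zero => simp
    | succ k ih =>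
      intro x
      rw [pow_succ, Equiv.Perm.mul_apply, ih, loopPerm_apply, hid]
      push_cast
      ring
  have hall : ∀ x y : ZMod m, (loopPerm α).SameCycle x y := by
    intro x y
    exact ⟨((y - x).val : ℤ), by
      rw [zpow_natCast, hpow, ZMod.natCast_zmod_val]; ring⟩
  rw [Nat.card_eq_one_iff_unique]
  constructor
  · constructor
    intro c₁ c₂
    induction c₁ using Quotient.ind with
    | _ x =>
      induction c₂ using Quotient.ind with
      | _ y => exact Quotient.sound (hall x y)
  · exact ⟨Quotient.mk _ 0⟩

theorem single_circle (m : ℕ) [NeZero m] :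
    ∀ s : ℕ, ∀ α : Equiv.Perm (ZMod m), (∀ i, α (α i) = i) → NonCrossing α →
      (Finset.univ.filter fun i => α i ≠ i).card = s →
      Nat.card (Quotient (orbitSetoid (loopPerm α))) = s / 2 + 1 := by
  intro s
  induction s using Nat.strong_induction_on with
  | _ s IH =>
  intro α hinv hnc hcard
  rcases Nat.eq_zero_or_pos s with rfl | hs
  · -- base case : no chords
    have hid : ∀ i, α i = i := by
      intro i
      by_contra h
      have hmem : i ∈ Finset.univ.filter fun i => α i ≠ i := by simp [h]
      rw [Finset.card_eq_zero] at hcard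
      simp [hcard] at hmem
    rw [card_orbits_loopPerm_id α hid]
  · -- inductive step
    -- find a chord of minimal length
    obtain ⟨i₀, hi₀⟩ : ∃ i₀ : ZMod m, α i₀ ≠ i₀ := by
      have : (Finset.univ.filter fun i => α i ≠ i).Nonempty := by
        rw [← Finset.card_pos, hcard]; exact hs
      obtain ⟨j, hj⟩ := this
      exact ⟨j, (Finset.mem_filter.1 hj).2⟩
    set S : Set ℕ := {e | ∃ j : ZMod m, α j ≠ j ∧ (α j - j).val = e} with hS
    have hSne : S.Nonempty := ⟨_, i₀, hi₀, rfl⟩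
    obtain ⟨i, hi, hid⟩ : ∃ j, α j ≠ j ∧ (α j - j).val = sInf S := Nat.sInf_mem hSne
    set d : ℕ := sInf S with hd
    have hmin : ∀ j : ZMod m, α j ≠ j → d ≤ (α j - j).val := fun j h =>
      Nat.sInf_le ⟨j, h, rfl⟩
    have hd1 : 1 ≤ d := by
      rcases Nat.eq_zero_or_pos d with h0 | h1
      · exfalso
        rw [h0] at hid
        rw [ZMod.val_eq_zero, sub_eq_zero] at hid
        exact hi hid
      · exact h1
    have hdm : d < m := hid ▸ ZMod.val_lt _
    -- isolation: points strictly between i and α i are fixed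
    have hiso : ∀ j : ZMod m, 0 < (j - i).val → (j - i).val < d → α j = j := by
      intro j hj1 hj2
      by_contra hj
      have hji : j ≠ i := by
        intro h; rw [h] at hj1; simp at hj1
      have hjαi : j ≠ α i := by
        intro h
        rw [h, hid] at hj2
        exact lt_irrefl _ hj2
      have hB1 : CyclicBetween i (α i) j := ⟨hj1, by rw [hid]; exact hj2⟩
      have hB2 : CyclicBetween i (α i) (α j) := by
        have hncij := hnc i j hji hjαi
        by_contra hB2
        exact hncij (Or.inl ⟨hB1, hB2⟩)
      obtain ⟨hB2a, hB2b⟩ := hB2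
      rw [hid] at hB2b
      set u := (j - i).val with hu
      set v := (α j - i).val with hv
      have huv : u ≠ v := by
        intro h
        have : j - i = α j - i := ZMod.val_injective m h
        have : j = α j := by
          have := congrArg (· + i) this
          simpa using this
        exact hj this.symm
      rcases lt_or_gt_of_ne huv with hlt | hgt
      · -- u < v : chord from j forward is shorter
        have hsub : (α j - j).val = v - u := by
          have : α j - j = (α j - i) - (j - i) := by ring
          rw [this, ZMod.val_sub (by omega)]
        have := hmin j hj
        omega
      · -- v < u : chord from α j forward is shorter
        have hsub : (j - α j).val = u - v := by
          have : j - α j = (j - i) - (α j - i) := by ring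
          rw [this, ZMod.val_sub (by omega)]
        have hαj : α (α j) ≠ α j := by
          rw [hinv j]; exact fun h => hj h.symm
        have := hmin (α j) hαj
        rw [hinv j] at this
        omega
    have hαi : α i = i + (d : ZMod m) := by
      have h1 : ((α i - i).val : ZMod m) = α i - i := ZMod.natCast_zmod_val _
      rw [hid] at h1
      have h2 : α i - i = (d : ZMod m) := h1.symm
      rw [sub_eq_iff_eq_add] at h2
      rw [h2]; ring
    -- the cycle C of loopPerm α containing α i - 1
    set p := loopPerm α with hp
    set InC : ZMod m → Prop := fun x => ∃ k : ℕ, k < d ∧ x = i + (k : ZMod m) with hInC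
    have hCstep : ∀ x, InC x → InC (p x) := by
      rintro x ⟨k, hk, rfl⟩
      rcases Nat.lt_or_ge (k + 1) d with hlt | hge
      · refine ⟨k + 1, hlt, ?_⟩
        rw [loopPerm_apply]
        have harg : i + (k : ZMod m) + 1 = i + ((k + 1 : ℕ) : ZMod m) := by push_cast; ring
        rw [harg, hiso (i + ((k + 1 : ℕ) : ZMod m))]
        · rw [add_sub_cancel_left, ZMod.val_cast_of_lt (by omega)]; omega
        · rw [add_sub_cancel_left, ZMod.val_cast_of_lt (by omega)]; omega
      · have hkd : k + 1 = d := by omega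
        refine ⟨0, by omega, ?_⟩
        rw [loopPerm_apply]
        have harg : i + (k : ZMod m) + 1 = α i := by
          rw [hαi, ← hkd]; push_cast; ring
        rw [harg, hinv]
        simp
    have hCpow : ∀ (nn : ℕ) (x : ZMod m), InC x → InC ((p ^ nn) x) := by
      intro nn
      induction nn with
      | zero => simpa using fun x h => h
      | succ nn ih =>
        intro x hx
        rw [pow_succ', Equiv.Perm.mul_apply]
        exact hCstep _ (ih x hx)
    have hbC : InC (α i - 1) := by
      refine ⟨d - 1, by omega, ?_⟩
      rw [hαi]
      have : ((d - 1 : ℕ) : ZMod m) = (d : ZMod m) - 1 := by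
        push_cast [Nat.cast_sub (by omega : 1 ≤ d)]; ring
      rw [this]; ring
    have haC : ¬ InC (i - 1) := by
      rintro ⟨k, hk, hkeq⟩
      have : ((k + 1 : ℕ) : ZMod m) = 0 := by
        push_cast
        have := congrArg (· - i) hkeq
        have h2 : (-1 : ZMod m) = (k : ZMod m) := by
          calc (-1 : ZMod m) = i - 1 - i := by ring
          _ = i + (k : ZMod m) - i := by rw [hkeq]
          _ = (k : ZMod m) := by ring
        rw [← h2]; ring
      rw [ZMod.natCast_eq_zero_iff] at this
      have := Nat.le_of_dvd (by omega) this
      omega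
    have hnsc : ¬ p.SameCycle (i - 1) (α i - 1) := by
      intro h
      obtain ⟨nn, -, hnn⟩ := h.symm.exists_pow_eq'
      exact haC (hnn ▸ hCpow nn _ hbC)
    -- the reduced involution
    set α' : Equiv.Perm (ZMod m) := α * Equiv.swap i (α i) with hα'
    have hα'i : α' i = i := by
      rw [hα', Equiv.Perm.mul_apply, Equiv.swap_apply_left, hinv]
    have hα'αi : α' (α i) = α i := by
      rw [hα', Equiv.Perm.mul_apply, Equiv.swap_apply_right]
    have hα'other : ∀ x, x ≠ i → x ≠ α i → α' x = α x := by
      intro x h1 h2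
      rw [hα', Equiv.Perm.mul_apply, Equiv.swap_apply_of_ne_of_ne h1 h2]
    have hinv' : ∀ x, α' (α' x) = x := by
      intro x
      rcases eq_or_ne x i with rfl | h1
      · rw [hα'i, hα'i]
      rcases eq_or_ne x (α i) with rfl | h2
      · rw [hα'αi, hα'αi]
      · rw [hα'other x h1 h2, hα'other (α x) ?_ ?_, hinv]
        · intro h; exact h2 (by rw [← h, hinv])
        · intro h; exact h1 (α.injective h)
    have hnc' : NonCrossing α' := by
      intro i' j' hji hjαi' hcross
      have hfalse : ∀ z j'' : ZMod m, ¬ CyclicBetween z z j'' := by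
        intro z j'' h
        obtain ⟨h1, h2⟩ := h
        rw [sub_self, ZMod.val_zero] at h2
        omega
      unfold ChordsCross Xor' at hcross
      rcases eq_or_ne i' i with rfl | hii
      · rw [hα'i] at hcross
        rcases hcross with ⟨h1, -⟩ | ⟨h1, -⟩ <;> exact hfalse _ _ h1
      rcases eq_or_ne i' (α i) with rfl | hiαi
      · rw [hα'αi] at hcross
        rcases hcross with ⟨h1, -⟩ | ⟨h1, -⟩ <;> exact hfalse _ _ h1
      rw [hα'other i' hii hiαi] at hcross hjαi'
      rcases eq_or_ne j' i with rfl | hji'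
      · rw [hα'i] at hcross
        rcases hcross with ⟨h1, h2⟩ | ⟨h1, h2⟩ <;> exact h2 h1
      rcases eq_or_ne j' (α i) with rfl | hjαi''
      · rw [hα'αi] at hcross
        rcases hcross with ⟨h1, h2⟩ | ⟨h1, h2⟩ <;> exact h2 h1
      rw [hα'other j' hji' hjαi''] at hcross
      exact hnc i' j' hji hjαi' hcross
    -- the support of α' has s - 2 elements
    have hsupp : (Finset.univ.filter fun x => α' x ≠ x) =
        (Finset.univ.filter fun x => α x ≠ x) \ {i, α i} := by
      ext x
      simp only [Finset.mem_filter, Finset.mem_univ, true_and, Finset.mem_sdiff,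
        Finset.mem_insert, Finset.mem_singleton]
      constructor
      · intro hx
        have h1 : x ≠ i := fun h => hx (h ▸ hα'i)
        have h2 : x ≠ α i := fun h => hx (h ▸ hα'αi)
        rw [hα'other x h1 h2] at hx
        exact ⟨hx, fun h => h.elim h1 h2⟩
      · rintro ⟨hx, hne⟩
        push_neg at hne
        rw [hα'other x hne.1 hne.2]
        exact hx
    have hsub : {i, α i} ⊆ (Finset.univ.filter fun x => α x ≠ x) := by
      intro x hx
      simp only [Finset.mem_insert, Finset.mem_singleton] at hx
      rcases hx with rfl | rfl
      · simp [hi]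
      · simp only [Finset.mem_filter, Finset.mem_univ, true_and]
        rw [hinv]
        exact fun h => hi h.symm
    have hpair : ({i, α i} : Finset (ZMod m)).card = 2 := by
      rw [Finset.card_insert_of_notMem (by simp [hi]; exact fun h => hi h.symm),
        Finset.card_singleton]
    have hcard' : (Finset.univ.filter fun x => α' x ≠ x).card = s - 2 := by
      rw [hsupp, Finset.card_sdiff_of_subset hsub, hpair, hcard]
    have hs2 : 2 ≤ s := by
      rw [← hcard]
      calc 2 = ({i, α i} : Finset (ZMod m)).card := hpair.symm
      _ ≤ _ := Finset.card_le_card hsub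
    -- the loop permutations differ by a swap
    have hq_eq : loopPerm α * Equiv.swap (i - 1) (α i - 1) = loopPerm α' := by
      apply Equiv.ext
      intro x
      rw [Equiv.Perm.mul_apply, loopPerm_apply, loopPerm_apply]
      rcases eq_or_ne x (i - 1) with rfl | h1
      · rw [Equiv.swap_apply_left]
        have e1 : α i - 1 + 1 = α i := by ring
        have e2 : i - 1 + 1 = i := by ring
        rw [e1, e2, hinv, hα'i]
      rcases eq_or_ne x (α i - 1) with rfl | h2
      · rw [Equiv.swap_apply_right]
        have e1 : α i - 1 + 1 = α i := by ring
        have e2 : i - 1 + 1 = i := by ring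
        rw [e1, e2, hα'αi]
      · rw [Equiv.swap_apply_of_ne_of_ne h1 h2]
        have h1' : x + 1 ≠ i := fun h => h1 (by rw [← h]; ring)
        have h2' : x + 1 ≠ α i := fun h => h2 (by rw [← h]; ring)
        rw [hα'other _ h1' h2']
    -- conclude by the merge lemma and induction
    have hmerge := card_orbits_mul_swap p (i - 1) (α i - 1) hnsc
    rw [hp, hq_eq] at hmerge
    have hIH := IH (s - 2) (by omega) α' hinv' hnc' hcard'
    rw [hp, hmerge, hIH]
    omega

theorem card_orbits_sigma {ι : Type*} [Fintype ι] {βf : ι → Type*} [∀ k, Finite (βf k)]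
    (f : ∀ k, Equiv.Perm (βf k)) :
    Nat.card (Quotient (orbitSetoid (Equiv.sigmaCongrRight f))) =
      ∑ k, Nat.card (Quotient (orbitSetoid (f k))) := by
  classical
  have hzpow : ∀ z : ℤ, (Equiv.sigmaCongrRight f) ^ z =
      Equiv.sigmaCongrRight (fun k => (f k) ^ z) := by
    intro z
    have := map_zpow (Equiv.Perm.sigmaCongrRightHom βf) f z
    exact this.symm
  have hwd1 : ∀ a b : Σ k, βf k, Equiv.Perm.SameCycle (Equiv.sigmaCongrRight f) a b →
      (⟨a.1, Quotient.mk (orbitSetoid (f a.1)) a.2⟩ :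
        Σ k, Quotient (orbitSetoid (f k))) = ⟨b.1, Quotient.mk (orbitSetoid (f b.1)) b.2⟩ := by
    rintro ⟨k, x⟩ ⟨k', y⟩ ⟨z, hz⟩
    rw [hzpow] at hz
    simp only [Equiv.sigmaCongrRight_apply] at hz
    obtain ⟨rfl, hval⟩ := Sigma.mk.inj_iff.1 hz
    have hval' : ((f k) ^ z) x = y := eq_of_heq hval
    exact Sigma.ext rfl (heq_of_eq (Quotient.sound ⟨z, hval'⟩))
  have hwd2 : ∀ (k : ι) (x y : βf k), Equiv.Perm.SameCycle (f k) x y →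
      Quotient.mk (orbitSetoid (Equiv.sigmaCongrRight f)) ⟨k, x⟩ =
        Quotient.mk (orbitSetoid (Equiv.sigmaCongrRight f)) ⟨k, y⟩ := by
    rintro k x y ⟨z, hz⟩
    refine Quotient.sound ⟨z, ?_⟩
    rw [hzpow]
    simp only [Equiv.sigmaCongrRight_apply]
    rw [hz]
  let F : Quotient (orbitSetoid (Equiv.sigmaCongrRight f)) →
      Σ k, Quotient (orbitSetoid (f k)) :=
    Quotient.lift (fun a => ⟨a.1, Quotient.mk (orbitSetoid (f a.1)) a.2⟩) hwd1
  let G : (Σ k, Quotient (orbitSetoid (f k))) →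
      Quotient (orbitSetoid (Equiv.sigmaCongrRight f)) := fun c =>
    Quotient.lift (fun x => Quotient.mk (orbitSetoid (Equiv.sigmaCongrRight f)) ⟨c.1, x⟩)
      (fun x y h => hwd2 c.1 x y h) c.2
  have hFG : Function.LeftInverse G F := by
    intro c
    induction c using Quotient.ind with
    | _ a => rfl
  have hGF : Function.RightInverse G F := by
    rintro ⟨k, c⟩
    induction c using Quotient.ind with
    | _ x => rfl
  have e : Quotient (orbitSetoid (Equiv.sigmaCongrRight f)) ≃
      Σ k, Quotient (orbitSetoid (f k)) := ⟨F, G, hFG, hGF⟩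
  rw [Nat.card_congr e]
  haveI : ∀ k, Fintype (Quotient (orbitSetoid (f k))) := fun k => Fintype.ofFinite _
  rw [Nat.card_eq_fintype_card, Fintype.card_sigma]
  exact Finset.sum_congr rfl fun k _ => (Nat.card_eq_fintype_card).symm


/-- A planar chord diagram on `l ≥ 1` circles with `n k ≥ 1` chords on the `k`-th circle
(a disjoint union of planar one-circle diagrams) has exactly `l + ∑ k, n k` planar loops:
the permutation of the disjoint union acting on the `k`-th summand by `j ↦ α k (j + 1)`
has exactly `l + ∑ k, n k` orbits. -/
theorem planar_chord_diagram_multi_loop_count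
    (l : ℕ) (hl : 1 ≤ l) (n : Fin l → ℕ) (hn : ∀ k, 1 ≤ n k)
    (α : ∀ k, Equiv.Perm (ZMod (2 * n k)))
    (hinv : ∀ k i, α k (α k i) = i) (hfree : ∀ k i, α k i ≠ i)
    (hplanar : ∀ k, NonCrossing (α k)) :
    Nat.card (Quotient (orbitSetoid
      (Equiv.sigmaCongrRight fun k => loopPerm (α k)))) = l + ∑ k, n k := by
  haveI : ∀ k, NeZero (2 * n k) := fun k => ⟨by have := hn k; omega⟩
  rw [card_orbits_sigma]
  have hk : ∀ k, Nat.card (Quotient (orbitSetoid (loopPerm (α k)))) = n k + 1 := by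
    intro k
    have hfilter : (Finset.univ.filter fun i => α k i ≠ i).card = 2 * n k := by
      rw [Finset.filter_true_of_mem (fun i _ => hfree k i), Finset.card_univ, ZMod.card]
    rw [single_circle (2 * n k) (2 * n k) (α k) (hinv k) (hplanar k) hfilter]
    omega
  rw [Finset.sum_congr rfl fun k _ => hk k, Finset.sum_add_distrib]
  simp [add_comm]
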